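/- In spatial dimension one (Ω = (a,b) ⊂ ℝ), the sparse vector field regularizer coincides with total variation: for every u ∈ BV(a,b), R(u) = TV(u), where R(u) = inf{‖v‖_{M(a,b)} : v a finite signed measure with u'' = v' weakly under no-flux boundary conditions}. -/

import Mathlib

open MeasureTheory Filter
open scoped ENNReal

/-- A (scalar) finite Radon measure on the interval `(a,b)`, encoded as a linear
functional on continuous functions whose dual pairing set is bounded. -/
structure Radon1 (a b : ℝ) where
  pair : (ℝ → ℝ) → ℝ
  pair_add : ∀ f g, pair (f + g) = pair f + pair g
  pair_smul : ∀ (c : ℝ) f, pair (c • f) = c * pair f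
  bdd : BddAbove {r | ∃ φ : ℝ → ℝ, Continuous φ ∧ (∀ x ∈ Set.Ioo a b, |φ x| ≤ 1) ∧ r = pair φ}

/-- Total variation norm `‖v‖_{M(a,b)}`. -/
noncomputable def Radon1.tvNorm {a b : ℝ} (v : Radon1 a b) : ℝ :=
  sSup {r | ∃ φ : ℝ → ℝ, Continuous φ ∧ (∀ x ∈ Set.Ioo a b, |φ x| ≤ 1) ∧ r = v.pair φ}

/-- Weak form of `u'' = v'` with no-flux boundary conditions:
`∫ φ'' u + ∫ φ' dv = 0` for all `φ ∈ C²` with `φ'(a) = φ'(b) = 0`. -/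
def Adm1 (a b : ℝ) (u : ℝ → ℝ) (v : Radon1 a b) : Prop :=
  ∀ φ : ℝ → ℝ, ContDiff ℝ 2 φ → deriv φ a = 0 → deriv φ b = 0 →
    (∫ x in Set.Ioo a b, deriv (deriv φ) x * u x) + v.pair (deriv φ) = 0

/-- The 1D sparse vector field regularizer. -/
noncomputable def R1 (a b : ℝ) (u : ℝ → ℝ) : ℝ≥0∞ :=
  ⨅ (v : Radon1 a b) (_ : Adm1 a b u v), ENNReal.ofReal v.tvNorm

/-- Dual set defining the total variation of `u` on `(a,b)`. -/
def TVset1 (a b : ℝ) (u : ℝ → ℝ) : Set ℝ :=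
  {r | ∃ g : ℝ → ℝ, ContDiff ℝ 1 g ∧ HasCompactSupport g ∧ tsupport g ⊆ Set.Ioo a b ∧
    (∀ x, |g x| ≤ 1) ∧ r = ∫ x in Set.Ioo a b, u x * deriv g x}

/-- Total variation of `u` on `(a,b)`. -/
noncomputable def TV1 (a b : ℝ) (u : ℝ → ℝ) : ℝ := sSup (TVset1 a b u)


noncomputable section SVFAux


def st : ℝ → ℝ := Real.smoothTransition

def cut (a b δ : ℝ) (x : ℝ) : ℝ :=
  st ((x - (a + δ)) / δ) * st ((b - δ - x) / δ)

def cut' (a b δ : ℝ) (x : ℝ) : ℝ :=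
  deriv st ((x - (a + δ)) / δ) * (1 / δ) * st ((b - δ - x) / δ) +
    st ((x - (a + δ)) / δ) * (deriv st ((b - δ - x) / δ) * (-1 / δ))

lemma st_contDiff : ContDiff ℝ 1 st := Real.smoothTransition.contDiff

lemma st_abs_le_one (t : ℝ) : |st t| ≤ 1 := by
  unfold st
  rw [abs_of_nonneg (Real.smoothTransition.nonneg t)]
  exact Real.smoothTransition.le_one t

lemma st_deriv_zero {t : ℝ} (h : t < 0 ∨ 1 < t) : deriv st t = 0 := by
  rcases h with h | h
  · have he : st =ᶠ[nhds t] (fun _ => (0:ℝ)) :=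
      Filter.eventually_of_mem (Iio_mem_nhds h) fun y hy =>
        Real.smoothTransition.zero_of_nonpos (le_of_lt hy)
    rw [he.deriv_eq, deriv_const]
  · have he : st =ᶠ[nhds t] (fun _ => (1:ℝ)) :=
      Filter.eventually_of_mem (Ioi_mem_nhds h) fun y hy =>
        Real.smoothTransition.one_of_one_le (le_of_lt hy)
    rw [he.deriv_eq, deriv_const]

lemma st_deriv_bound : ∃ C : ℝ, 0 ≤ C ∧ ∀ t, |deriv st t| ≤ C := by
  have hc : Continuous (deriv st) := (contDiff_one_iff_deriv.mp st_contDiff).2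
  obtain ⟨C, hC⟩ := (isCompact_Icc (a := (0:ℝ)) (b := 1)).exists_bound_of_continuousOn
    hc.continuousOn
  refine ⟨max C 0, le_max_right _ _, fun t => ?_⟩
  by_cases ht : t ∈ Set.Icc (0:ℝ) 1
  · exact (hC t ht).trans (le_max_left _ _)
  · rw [st_deriv_zero]
    · simp
    · rcases lt_or_ge t 0 with h | h
      · exact Or.inl h
      · exact Or.inr (by by_contra hco; exact ht ⟨h, le_of_not_gt hco⟩)

lemma cut_contDiff (a b δ : ℝ) : ContDiff ℝ 1 (cut a b δ) := by
  have h1 : ContDiff ℝ 1 (fun x : ℝ => (x - (a + δ)) / δ) :=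
    (contDiff_id.sub contDiff_const).div_const δ
  have h2 : ContDiff ℝ 1 (fun x : ℝ => (b - δ - x) / δ) :=
    (contDiff_const.sub contDiff_id).div_const δ
  exact (st_contDiff.comp h1).mul (st_contDiff.comp h2)

lemma cut'_continuous (a b δ : ℝ) : Continuous (cut' a b δ) := by
  have hd : Continuous (deriv st) := (contDiff_one_iff_deriv.mp st_contDiff).2
  have hs : Continuous st := st_contDiff.continuous
  have h1 : Continuous (fun x : ℝ => (x - (a + δ)) / δ) :=
    (continuous_id.sub continuous_const).div_const δ
  have h2 : Continuous (fun x : ℝ => (b - δ - x) / δ) :=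
    (continuous_const.sub continuous_id).div_const δ
  exact (((hd.comp h1).mul continuous_const).mul (hs.comp h2)).add
    ((hs.comp h1).mul ((hd.comp h2).mul continuous_const))

lemma cut_nonneg (a b δ x : ℝ) : 0 ≤ cut a b δ x :=
  mul_nonneg (Real.smoothTransition.nonneg _) (Real.smoothTransition.nonneg _)

lemma cut_le_one (a b δ x : ℝ) : cut a b δ x ≤ 1 :=
  mul_le_one₀ (Real.smoothTransition.le_one _) (Real.smoothTransition.nonneg _)
    (Real.smoothTransition.le_one _)

lemma cut_eq_zero_left {a b δ x : ℝ} (hδ : 0 < δ) (hx : x ≤ a + δ) : cut a b δ x = 0 := by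
  unfold cut st
  rw [Real.smoothTransition.zero_of_nonpos
    (div_nonpos_of_nonpos_of_nonneg (by linarith) hδ.le), zero_mul]

lemma cut_eq_zero_right {a b δ x : ℝ} (hδ : 0 < δ) (hx : b - δ ≤ x) : cut a b δ x = 0 := by
  unfold cut st
  rw [Real.smoothTransition.zero_of_nonpos (x := (b - δ - x)/δ)
    (div_nonpos_of_nonpos_of_nonneg (by linarith) hδ.le), mul_zero]

lemma cut_eq_one {a b δ x : ℝ} (hδ : 0 < δ) (h1 : a + 2*δ ≤ x) (h2 : x ≤ b - 2*δ) :
    cut a b δ x = 1 := by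
  unfold cut st
  rw [Real.smoothTransition.one_of_one_le (by rw [le_div_iff₀ hδ]; linarith),
    Real.smoothTransition.one_of_one_le (by rw [le_div_iff₀ hδ]; linarith), mul_one]

lemma cut'_eq_zero {a b δ x : ℝ} (hδ : 0 < δ) (h1 : a + 2*δ < x) (h2 : x < b - 2*δ) :
    cut' a b δ x = 0 := by
  unfold cut'
  rw [st_deriv_zero (Or.inr (by rw [lt_div_iff₀ hδ]; linarith)),
    st_deriv_zero (Or.inr (by rw [lt_div_iff₀ hδ]; linarith))]
  ring

lemma hasDerivAt_cut (a b : ℝ) {δ : ℝ} (x : ℝ) :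
    HasDerivAt (cut a b δ) (cut' a b δ x) x := by
  have hst : ∀ t : ℝ, HasDerivAt st (deriv st t) t := fun t =>
    ((st_contDiff.differentiable one_ne_zero) t).hasDerivAt
  have h1 : HasDerivAt (fun x : ℝ => (x - (a + δ)) / δ) (1 / δ) x := by
    simpa using ((hasDerivAt_id x).sub_const (a + δ)).div_const δ
  have h2 : HasDerivAt (fun x : ℝ => (b - δ - x) / δ) (-1 / δ) x := by
    simpa using ((hasDerivAt_id x).const_sub (b - δ)).div_const δ
  exact ((hst _).comp x h1).mul ((hst _).comp x h2)

lemma tsupport_cut_subset {a b δ : ℝ} (hδ : 0 < δ) :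
    tsupport (cut a b δ) ⊆ Set.Icc (a + δ) (b - δ) := by
  apply closure_minimal _ isClosed_Icc
  intro x hx
  rcases lt_or_ge x (a + δ) with h | h
  · exact absurd (cut_eq_zero_left hδ h.le) hx
  rcases lt_or_ge x (b - δ) with h2 | h2
  · exact ⟨h, h2.le⟩
  · exact absurd (cut_eq_zero_right hδ h2) hx

lemma tsupport_cut_subset_Ioo {a b δ : ℝ} (hδ : 0 < δ) :
    tsupport (cut a b δ) ⊆ Set.Ioo a b := fun x hx => by
  have h := tsupport_cut_subset hδ hx
  exact ⟨by linarith [h.1], by linarith [h.2]⟩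

lemma hasCompactSupport_cut {a b δ : ℝ} (hδ : 0 < δ) : HasCompactSupport (cut a b δ) := by
  apply HasCompactSupport.intro (isCompact_Icc (a := a + δ) (b := b - δ))
  intro x hx
  rcases lt_or_ge x (a + δ) with h | h
  · exact cut_eq_zero_left hδ h.le
  rcases le_or_gt x (b - δ) with h2 | h2
  · exact absurd ⟨h, h2⟩ hx
  · exact cut_eq_zero_right hδ h2.le

/-- Core analytic estimate. -/
lemma core_le_TV1 {a b : ℝ} (hab : a < b) {u : ℝ → ℝ}
    (hu : Integrable u (volume.restrict (Set.Ioo a b)))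
    (hBV : BddAbove (TVset1 a b u)) (ψ : ℝ → ℝ) (hψ : ContDiff ℝ 1 ψ)
    (ha0 : ψ a = 0) (hb0 : ψ b = 0)
    (hint : Integrable (fun x => deriv ψ x * u x) (volume.restrict (Set.Ioo a b)))
    (hle : ∀ x ∈ Set.Ioo a b, |ψ x| ≤ 1) :
    (-∫ x in Set.Ioo a b, deriv ψ x * u x) ≤ TV1 a b u := by
  obtain ⟨C, hC0, hC⟩ := st_deriv_bound
  have hψd : Differentiable ℝ ψ := hψ.differentiable one_ne_zero
  have hψ'c : Continuous (deriv ψ) := (contDiff_one_iff_deriv.mp hψ).2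
  obtain ⟨L0, hL0⟩ := (isCompact_Icc (a := a) (b := b)).exists_bound_of_continuousOn
    hψ'c.continuousOn
  set L := max L0 0 with hL
  have hL0' : (0:ℝ) ≤ L := le_max_right _ _
  have hLb : ∀ x ∈ Set.Icc a b, ‖deriv ψ x‖ ≤ L := fun x hx => (hL0 x hx).trans (le_max_left _ _)
  have hlipa : ∀ x ∈ Set.Icc a b, |ψ x| ≤ L * (x - a) := by
    intro x hx
    have h := (convex_Icc a b).norm_image_sub_le_of_norm_deriv_le
      (fun y _ => hψd y) hLb (Set.left_mem_Icc.mpr hab.le) hx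
    rw [ha0, sub_zero, Real.norm_eq_abs, Real.norm_eq_abs,
      abs_of_nonneg (show (0:ℝ) ≤ x - a by linarith [hx.1])] at h
    exact h
  have hlipb : ∀ x ∈ Set.Icc a b, |ψ x| ≤ L * (b - x) := by
    intro x hx
    have h := (convex_Icc a b).norm_image_sub_le_of_norm_deriv_le
      (fun y _ => hψd y) hLb (Set.right_mem_Icc.mpr hab.le) hx
    rw [hb0, sub_zero, Real.norm_eq_abs, Real.norm_eq_abs,
      abs_sub_comm, abs_of_nonneg (show (0:ℝ) ≤ b - x by linarith [hx.2])] at h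
    exact h
  -- pointwise bound on ψ * cut'
  have hK : ∀ δ, 0 < δ → ∀ x ∈ Set.Icc a b, |ψ x * cut' a b δ x| ≤ 4*(L*C) := by
    intro δ hδ x hx
    have hterm1 : |ψ x * (deriv st ((x - (a + δ)) / δ) * (1 / δ) * st ((b - δ - x) / δ))| ≤
        2*(L*C) := by
      by_cases hz : deriv st ((x - (a + δ)) / δ) = 0
      · rw [hz]; simp; positivity
      · have h0 : ¬((x - (a + δ)) / δ < 0 ∨ 1 < (x - (a + δ)) / δ) := fun h => hz (st_deriv_zero h)
        push_neg at h0
        have hxa : x - a ≤ 2*δ := by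
          have h2 := h0.2
          rw [div_le_one hδ] at h2
          linarith
        have e1 : |ψ x * (deriv st ((x - (a + δ)) / δ) * (1 / δ) * st ((b - δ - x) / δ))|
            = |ψ x| * (|deriv st ((x - (a + δ)) / δ)| * (1 / δ) * |st ((b - δ - x) / δ)|) := by
          rw [abs_mul, abs_mul, abs_mul, abs_of_pos (by positivity : (0:ℝ) < 1/δ)]
        rw [e1]
        calc |ψ x| * (|deriv st ((x - (a + δ)) / δ)| * (1 / δ) * |st ((b - δ - x) / δ)|)
            ≤ (L * (2*δ)) * (C * (1 / δ) * 1) := by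
              apply mul_le_mul ((hlipa x hx).trans (by nlinarith)) ?_ (by positivity) (by positivity)
              exact mul_le_mul (mul_le_mul (hC _) le_rfl (by positivity) hC0)
                (st_abs_le_one _) (abs_nonneg _) (by positivity)
          _ = 2*(L*C) := by field_simp
    have hterm2 : |ψ x * (st ((x - (a + δ)) / δ) * (deriv st ((b - δ - x) / δ) * (-1 / δ)))| ≤
        2*(L*C) := by
      by_cases hz : deriv st ((b - δ - x) / δ) = 0
      · rw [hz]; simp; positivity
      · have h0 : ¬((b - δ - x) / δ < 0 ∨ 1 < (b - δ - x) / δ) := fun h => hz (st_deriv_zero h)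
        push_neg at h0
        have hxb : b - x ≤ 2*δ := by
          have h2 := h0.2
          rw [div_le_one hδ] at h2
          linarith
        have e1 : |ψ x * (st ((x - (a + δ)) / δ) * (deriv st ((b - δ - x) / δ) * (-1 / δ)))|
            = |ψ x| * (|st ((x - (a + δ)) / δ)| * (|deriv st ((b - δ - x) / δ)| * (1 / δ))) := by
          rw [abs_mul, abs_mul, abs_mul, abs_div, abs_neg, abs_one,
            abs_of_pos hδ]
        rw [e1]
        calc |ψ x| * (|st ((x - (a + δ)) / δ)| * (|deriv st ((b - δ - x) / δ)| * (1 / δ)))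
            ≤ (L * (2*δ)) * (1 * (C * (1 / δ))) := by
              apply mul_le_mul ((hlipb x hx).trans (by nlinarith)) ?_ (by positivity) (by positivity)
              exact mul_le_mul (st_abs_le_one _)
                (mul_le_mul (hC _) le_rfl (by positivity) hC0) (by positivity) zero_le_one
          _ = 2*(L*C) := by field_simp
    calc |ψ x * cut' a b δ x|
        = |ψ x * (deriv st ((x - (a + δ)) / δ) * (1 / δ) * st ((b - δ - x) / δ)) +
            ψ x * (st ((x - (a + δ)) / δ) * (deriv st ((b - δ - x) / δ) * (-1 / δ)))| := by
          unfold cut'; ring_nf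
      _ ≤ _ + _ := abs_add_le _ _
      _ ≤ 2*(L*C) + 2*(L*C) := add_le_add hterm1 hterm2
      _ = 4*(L*C) := by ring
  -- the approximating integrals
  set F : ℝ → ℝ := fun δ => ∫ x in Set.Ioo a b,
    u x * (-(deriv ψ x) * cut a b δ x + -(ψ x) * cut' a b δ x) with hF
  have hmem : ∀ δ, 0 < δ → δ < (b - a)/2 → F δ ∈ TVset1 a b u := by
    intro δ hδ hδ2
    have hg : ∀ x, HasDerivAt (fun y => -(ψ y) * cut a b δ y)
        (-(deriv ψ x) * cut a b δ x + -(ψ x) * cut' a b δ x) x := fun x =>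
      (((hψd x).hasDerivAt).neg).mul (hasDerivAt_cut a b x)
    refine ⟨fun y => -(ψ y) * cut a b δ y, (hψ.neg).mul (cut_contDiff a b δ), ?_, ?_, ?_, ?_⟩
    · have : (fun y => -(ψ y) * cut a b δ y) = (fun y => -(ψ y)) * cut a b δ := rfl
      rw [this]
      exact (hasCompactSupport_cut hδ).mul_left
    · have h1 : (fun y => -(ψ y) * cut a b δ y) = (fun y => -(ψ y)) * cut a b δ := rfl
      rw [h1]
      exact subset_trans tsupport_mul_subset_right (tsupport_cut_subset_Ioo hδ)
    · intro x
      show |-(ψ x) * cut a b δ x| ≤ 1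
      by_cases hx : x ∈ Set.Ioo a b
      · rw [abs_mul, abs_neg, abs_of_nonneg (cut_nonneg a b δ x)]
        exact mul_le_one₀ (hle x hx) (cut_nonneg a b δ x) (cut_le_one a b δ x)
      · rcases lt_or_ge x b with h2 | h2
        · have hxa : x ≤ a := by
            by_contra hco
            exact hx ⟨lt_of_not_ge hco, h2⟩
          rw [cut_eq_zero_left hδ (by linarith)]
          simp
        · rw [cut_eq_zero_right hδ (by linarith)]
          simp
    · refine integral_congr_ae (Filter.Eventually.of_forall fun x => ?_)
      show u x * (-(deriv ψ x) * cut a b δ x + -(ψ x) * cut' a b δ x)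
        = u x * deriv (fun y => -(ψ y) * cut a b δ y) x
      rw [(hg x).deriv]
  have hFle : ∀ᶠ δ in nhdsWithin (0:ℝ) (Set.Ioi 0), F δ ≤ TV1 a b u := by
    filter_upwards [Ioo_mem_nhdsGT_of_mem
      (show (0:ℝ) ∈ Set.Ico 0 ((b - a)/2) from ⟨le_rfl, by linarith⟩)] with δ hδ
    exact le_csSup hBV (hmem δ hδ.1 hδ.2)
  have hTend : Tendsto F (nhdsWithin (0:ℝ) (Set.Ioi 0))
      (nhds (∫ x in Set.Ioo a b, u x * -(deriv ψ x))) := by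
    apply tendsto_integral_filter_of_dominated_convergence
      (bound := fun x => |u x * deriv ψ x| + |u x| * (4*(L*C)))
    · filter_upwards [self_mem_nhdsWithin] with δ hδ
      exact hu.aestronglyMeasurable.mul
        ((((hψ'c.neg).mul (cut_contDiff a b δ).continuous).add
          ((hψ.continuous.neg).mul (cut'_continuous a b δ))).aestronglyMeasurable)
    · filter_upwards [self_mem_nhdsWithin] with δ (hδ : (0:ℝ) < δ)
      refine (ae_restrict_iff' measurableSet_Ioo).2 (Filter.Eventually.of_forall fun x hx => ?_)
      have hxI : x ∈ Set.Icc a b := Set.Ioo_subset_Icc_self hx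
      rw [Real.norm_eq_abs, mul_add]
      refine (abs_add_le _ _).trans (add_le_add ?_ ?_)
      · have e : |u x * (-(deriv ψ x) * cut a b δ x)| = |u x| * |deriv ψ x| * cut a b δ x := by
          rw [abs_mul, abs_mul, abs_neg, abs_of_nonneg (cut_nonneg a b δ x)]; ring
        rw [e, abs_mul (u x) (deriv ψ x)]
        exact mul_le_of_le_one_right (by positivity) (cut_le_one a b δ x)
      · rw [abs_mul]
        have h2 : |(-(ψ x)) * cut' a b δ x| = |ψ x * cut' a b δ x| := by
          rw [abs_mul, abs_mul, abs_neg]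
        rw [h2]
        exact mul_le_mul_of_nonneg_left (hK δ hδ x hxI) (abs_nonneg _)
    · refine Integrable.add ?_ ((hu.abs).mul_const _)
      have := hint.abs
      refine this.congr (Filter.Eventually.of_forall fun x => ?_)
      show |deriv ψ x * u x| = |u x * deriv ψ x|
      rw [mul_comm]
    · refine (ae_restrict_iff' measurableSet_Ioo).2 (Filter.Eventually.of_forall fun x hx => ?_)
      have hεa : (0:ℝ) < (x - a)/3 := by have := hx.1; linarith
      have hεb : (0:ℝ) < (b - x)/3 := by have := hx.2; linarith
      have hev : (fun δ => u x * (-(deriv ψ x) * cut a b δ x + -(ψ x) * cut' a b δ x))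
          =ᶠ[nhdsWithin (0:ℝ) (Set.Ioi 0)] (fun _ => u x * -(deriv ψ x)) := by
        filter_upwards [Ioo_mem_nhdsGT_of_mem
          (Set.mem_Ico.mpr ⟨le_rfl, lt_min hεa hεb⟩)] with δ hδ
        have hδa := lt_of_lt_of_le hδ.2 (min_le_left _ _)
        have hδb := lt_of_lt_of_le hδ.2 (min_le_right _ _)
        rw [cut_eq_one hδ.1 (by linarith) (by linarith),
          cut'_eq_zero hδ.1 (by linarith) (by linarith)]
        ring
      exact Tendsto.congr' hev.symm tendsto_const_nhds
  have hlim_le : (∫ x in Set.Ioo a b, u x * -(deriv ψ x)) ≤ TV1 a b u :=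
    le_of_tendsto hTend hFle
  have hrw : (-∫ x in Set.Ioo a b, deriv ψ x * u x)
      = ∫ x in Set.Ioo a b, u x * -(deriv ψ x) := by
    rw [← integral_neg]
    exact integral_congr_ae (Filter.Eventually.of_forall fun x => by ring)
  rw [hrw]
  exact hlim_le

/-- zero is in the TV dual set -/
lemma zero_mem_TVset1 (a b : ℝ) (u : ℝ → ℝ) : (0:ℝ) ∈ TVset1 a b u := by
  refine ⟨fun _ => 0, contDiff_const, ?_, ?_, by simp, ?_⟩
  · exact HasCompactSupport.intro (isCompact_Icc (a := a) (b := b)) (fun x _ => rfl)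
  · have h : tsupport (fun _ : ℝ => (0:ℝ)) = ∅ := by
      simp [tsupport, Function.support]
    rw [h]; exact Set.empty_subset _
  · simp [deriv_const]

lemma TV1_nonneg {a b : ℝ} {u : ℝ → ℝ} (hBV : BddAbove (TVset1 a b u)) : 0 ≤ TV1 a b u :=
  le_csSup hBV (zero_mem_TVset1 a b u)

/-- sup of |ψ| over the open interval -/
noncomputable def supIoo (a b : ℝ) (ψ : ℝ → ℝ) : ℝ :=
  sSup ((fun x => |ψ x|) '' Set.Ioo a b)

lemma supIoo_img_nonempty {a b : ℝ} (hab : a < b) (ψ : ℝ → ℝ) :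
    ((fun x => |ψ x|) '' Set.Ioo a b).Nonempty :=
  ⟨|ψ ((a+b)/2)|, ⟨(a+b)/2, ⟨by linarith, by linarith⟩, rfl⟩⟩

lemma abs_le_supIoo {a b : ℝ} {ψ : ℝ → ℝ}
    (hbd : BddAbove ((fun x => |ψ x|) '' Set.Ioo a b)) {x : ℝ} (hx : x ∈ Set.Ioo a b) :
    |ψ x| ≤ supIoo a b ψ :=
  le_csSup hbd ⟨x, hx, rfl⟩

lemma supIoo_le {a b M : ℝ} (hab : a < b) {ψ : ℝ → ℝ} (h : ∀ x ∈ Set.Ioo a b, |ψ x| ≤ M) :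
    supIoo a b ψ ≤ M := by
  apply csSup_le (supIoo_img_nonempty hab ψ)
  rintro y ⟨x, hx, rfl⟩
  exact h x hx

lemma supIoo_nonneg {a b : ℝ} (hab : a < b) {ψ : ℝ → ℝ}
    (hbd : BddAbove ((fun x => |ψ x|) '' Set.Ioo a b)) : 0 ≤ supIoo a b ψ :=
  (abs_nonneg (ψ ((a+b)/2))).trans
    (abs_le_supIoo hbd (x := (a+b)/2) ⟨by linarith, by linarith⟩)

lemma bdd_smul_image {a b c : ℝ} {ψ : ℝ → ℝ}
    (hbd : BddAbove ((fun x => |ψ x|) '' Set.Ioo a b)) :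
    BddAbove ((fun x => |(c • ψ) x|) '' Set.Ioo a b) := by
  obtain ⟨M, hM⟩ := hbd
  refine ⟨|c| * M, ?_⟩
  rintro y ⟨x, hx, rfl⟩
  show |c • ψ x| ≤ |c| * M
  rw [smul_eq_mul, abs_mul]
  exact mul_le_mul_of_nonneg_left (hM ⟨x, hx, rfl⟩) (abs_nonneg c)

lemma supIoo_smul {a b : ℝ} (hab : a < b) {ψ : ℝ → ℝ}
    (hbd : BddAbove ((fun x => |ψ x|) '' Set.Ioo a b)) {c : ℝ} (hc : 0 < c) :
    supIoo a b (c • ψ) = c * supIoo a b ψ := by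
  apply le_antisymm
  · apply supIoo_le hab
    intro x hx
    show |c • ψ x| ≤ c * supIoo a b ψ
    rw [smul_eq_mul, abs_mul, abs_of_pos hc]
    exact mul_le_mul_of_nonneg_left (abs_le_supIoo hbd hx) hc.le
  · rw [mul_comm, ← le_div_iff₀ hc]
    apply supIoo_le hab
    intro x hx
    rw [le_div_iff₀ hc]
    have : |ψ x| * c = |(c • ψ) x| := by
      show _ = |c • ψ x|
      rw [smul_eq_mul, abs_mul, abs_of_pos hc]; ring
    rw [this]
    exact abs_le_supIoo (bdd_smul_image hbd) hx

/-- submodule of functions bounded on (a,b) -/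
def Vsub (a b : ℝ) : Submodule ℝ (ℝ → ℝ) where
  carrier := {ψ | ∃ M, ∀ x ∈ Set.Ioo a b, |ψ x| ≤ M}
  add_mem' := by
    rintro f g ⟨M, hM⟩ ⟨N, hN⟩
    refine ⟨M + N, fun x hx => ?_⟩
    show |f x + g x| ≤ M + N
    exact (abs_add_le _ _).trans (add_le_add (hM x hx) (hN x hx))
  zero_mem' := ⟨0, fun x _ => by simp⟩
  smul_mem' := by
    rintro c f ⟨M, hM⟩
    refine ⟨|c| * M, fun x hx => ?_⟩
    show |c • f x| ≤ |c| * M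
    rw [smul_eq_mul, abs_mul]
    exact mul_le_mul_of_nonneg_left (hM x hx) (abs_nonneg c)

lemma mem_V_bdd {a b : ℝ} {ψ : ℝ → ℝ} (h : ψ ∈ Vsub a b) :
    BddAbove ((fun x => |ψ x|) '' Set.Ioo a b) := by
  obtain ⟨M, hM⟩ := h
  refine ⟨M, ?_⟩
  rintro y ⟨x, hx, rfl⟩
  exact hM x hx

/-- admissible test derivative predicate -/
def Wpred (a b : ℝ) (u : ℝ → ℝ) (ψ : ℝ → ℝ) : Prop :=
  ContDiff ℝ 1 ψ ∧ ψ a = 0 ∧ ψ b = 0 ∧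
    Integrable (fun x => deriv ψ x * u x) (volume.restrict (Set.Ioo a b))

def Wsub (a b : ℝ) (u : ℝ → ℝ) : Submodule ℝ (ℝ → ℝ) where
  carrier := {ψ | Wpred a b u ψ}
  add_mem' := by
    rintro f g ⟨hf1, hf2, hf3, hf4⟩ ⟨hg1, hg2, hg3, hg4⟩
    have hdf : Differentiable ℝ f := hf1.differentiable one_ne_zero
    have hdg : Differentiable ℝ g := hg1.differentiable one_ne_zero
    refine ⟨hf1.add hg1, by simp [hf2, hg2], by simp [hf3, hg3], ?_⟩
    have e : ∀ t, deriv (f + g) t * u t = deriv f t * u t + deriv g t * u t := fun t => by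
      rw [deriv_add (hdf t) (hdg t)]; ring
    exact (Integrable.congr (hf4.add hg4) (Filter.Eventually.of_forall fun t => (e t).symm))
  zero_mem' := by
    refine ⟨contDiff_const, rfl, rfl, ?_⟩
    have e : ∀ t, deriv (0 : ℝ → ℝ) t * u t = 0 := fun t => by
      rw [show (0 : ℝ → ℝ) = fun _ => (0:ℝ) from rfl, deriv_const]; ring
    exact (integrable_zero _ _ _).congr (Filter.Eventually.of_forall fun t => (e t).symm)
  smul_mem' := by
    rintro c f ⟨hf1, hf2, hf3, hf4⟩
    have hdf : Differentiable ℝ f := hf1.differentiable one_ne_zero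
    refine ⟨hf1.const_smul c, by simp [hf2], by simp [hf3], ?_⟩
    have e : ∀ t, deriv (c • f) t * u t = c * (deriv f t * u t) := fun t => by
      rw [show (c • f) = fun y => c * f y from rfl, deriv_const_mul c (hdf t)]; ring
    exact ((hf4.const_mul c).congr (Filter.Eventually.of_forall fun t => (e t).symm))

lemma Wsub_bdd {a b : ℝ} {u ψ : ℝ → ℝ} (h : ψ ∈ Wsub a b u) : ψ ∈ Vsub a b := by
  obtain ⟨M, hM⟩ := (isCompact_Icc (a := a) (b := b)).exists_bound_of_continuousOn
    (h.1.continuous.continuousOn)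
  exact ⟨M, fun x hx => hM x (Set.Ioo_subset_Icc_self hx)⟩

/-- the key sublinear bound -/
lemma key_bound {a b : ℝ} (hab : a < b) {u : ℝ → ℝ}
    (hu : Integrable u (volume.restrict (Set.Ioo a b)))
    (hBV : BddAbove (TVset1 a b u)) {ψ : ℝ → ℝ} (hW : ψ ∈ Wsub a b u) :
    (-∫ x in Set.Ioo a b, deriv ψ x * u x) ≤ TV1 a b u * supIoo a b ψ := by
  obtain ⟨hψ, ha0, hb0, hint⟩ := hW
  have hbd : BddAbove ((fun x => |ψ x|) '' Set.Ioo a b) :=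
    mem_V_bdd (Wsub_bdd (a := a) (b := b) (u := u) ⟨hψ, ha0, hb0, hint⟩)
  have hψd : Differentiable ℝ ψ := hψ.differentiable one_ne_zero
  rcases eq_or_lt_of_le (supIoo_nonneg hab hbd) with hs0 | hspos
  · -- sup = 0 : ψ vanishes on Ioo
    have hzero : ∀ x ∈ Set.Ioo a b, ψ x = 0 := by
      intro x hx
      have h1 := abs_le_supIoo hbd hx
      rw [← hs0] at h1
      exact abs_eq_zero.mp (le_antisymm h1 (abs_nonneg _))
    have hI : (∫ x in Set.Ioo a b, deriv ψ x * u x) = 0 := by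
      rw [setIntegral_congr_fun measurableSet_Ioo
        (g := fun _ => (0:ℝ)) ?_, integral_zero]
      intro x hx
      have hev : ψ =ᶠ[nhds x] (fun _ => (0:ℝ)) :=
        Filter.eventually_of_mem (isOpen_Ioo.mem_nhds hx) hzero
      show deriv ψ x * u x = 0
      rw [hev.deriv_eq, deriv_const]; ring
    rw [hI, ← hs0]
    simp
  · -- sup > 0 : normalize
    have hcore := core_le_TV1 hab hu hBV (fun x => (supIoo a b ψ)⁻¹ * ψ x)
      (contDiff_const.mul hψ) (by simp [ha0]) (by simp [hb0]) ?_ ?_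
    · have hd2 : ∀ x, deriv (fun y => (supIoo a b ψ)⁻¹ * ψ y) x
          = (supIoo a b ψ)⁻¹ * deriv ψ x := fun x =>
        deriv_const_mul (supIoo a b ψ)⁻¹ (hψd x)
      have hIeq : (∫ x in Set.Ioo a b, deriv (fun y => (supIoo a b ψ)⁻¹ * ψ y) x * u x)
          = (supIoo a b ψ)⁻¹ * ∫ x in Set.Ioo a b, deriv ψ x * u x := by
        rw [← integral_const_mul]
        refine integral_congr_ae (Filter.Eventually.of_forall fun x => ?_)
        show deriv (fun y => (supIoo a b ψ)⁻¹ * ψ y) x * u x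
          = (supIoo a b ψ)⁻¹ * (deriv ψ x * u x)
        rw [hd2 x]; ring
      rw [hIeq] at hcore
      have h2 := mul_le_mul_of_nonneg_left hcore hspos.le
      have e : supIoo a b ψ * -((supIoo a b ψ)⁻¹ * ∫ x in Set.Ioo a b, deriv ψ x * u x)
          = -(∫ x in Set.Ioo a b, deriv ψ x * u x) := by
        field_simp
      rw [e] at h2
      rw [mul_comm]
      exact h2
    · -- integrability of normalized integrand
      refine (hint.const_mul (supIoo a b ψ)⁻¹).congr (Filter.Eventually.of_forall fun x => ?_)
      show (supIoo a b ψ)⁻¹ * (deriv ψ x * u x)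
        = deriv (fun y => (supIoo a b ψ)⁻¹ * ψ y) x * u x
      rw [deriv_const_mul (supIoo a b ψ)⁻¹ (hψd x)]; ring
    · -- bound 1 on Ioo
      intro x hx
      have h1 := abs_le_supIoo hbd hx
      calc |(supIoo a b ψ)⁻¹ * ψ x| = (supIoo a b ψ)⁻¹ * |ψ x| := by
            rw [abs_mul, abs_of_pos (inv_pos.mpr hspos)]
        _ ≤ (supIoo a b ψ)⁻¹ * supIoo a b ψ :=
            mul_le_mul_of_nonneg_left h1 (inv_nonneg.mpr hspos.le)
        _ = 1 := inv_mul_cancel₀ hspos.ne'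


lemma Wint_add {a b : ℝ} {u f g : ℝ → ℝ} (hf : f ∈ Wsub a b u) (hg : g ∈ Wsub a b u) :
    (∫ t in Set.Ioo a b, deriv (f + g) t * u t)
      = (∫ t in Set.Ioo a b, deriv f t * u t) + ∫ t in Set.Ioo a b, deriv g t * u t := by
  have hdf : Differentiable ℝ f := hf.1.differentiable one_ne_zero
  have hdg : Differentiable ℝ g := hg.1.differentiable one_ne_zero
  have e : ∀ t, deriv (f + g) t * u t = deriv f t * u t + deriv g t * u t := fun t => by
    rw [deriv_add (hdf t) (hdg t)]; ring
  rw [integral_congr_ae (Filter.Eventually.of_forall e)]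
  exact integral_add hf.2.2.2 hg.2.2.2

lemma Wint_smul {a b : ℝ} {u f : ℝ → ℝ} (c : ℝ) (hf : f ∈ Wsub a b u) :
    (∫ t in Set.Ioo a b, deriv (c • f) t * u t)
      = c * ∫ t in Set.Ioo a b, deriv f t * u t := by
  have hdf : Differentiable ℝ f := hf.1.differentiable one_ne_zero
  have e : ∀ t, deriv (c • f) t * u t = c * (deriv f t * u t) := fun t => by
    rw [show (c • f) = fun y => c * f y from rfl, deriv_const_mul c (hdf t)]; ring
  rw [integral_congr_ae (Filter.Eventually.of_forall e)]
  exact integral_const_mul c _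

lemma supIoo_add_le {a b : ℝ} (hab : a < b) {f g : ℝ → ℝ}
    (hbf : BddAbove ((fun x => |f x|) '' Set.Ioo a b))
    (hbg : BddAbove ((fun x => |g x|) '' Set.Ioo a b)) :
    supIoo a b (f + g) ≤ supIoo a b f + supIoo a b g := by
  apply supIoo_le hab
  intro x hx
  show |f x + g x| ≤ _
  exact (abs_add_le _ _).trans (add_le_add (abs_le_supIoo hbf hx) (abs_le_supIoo hbg hx))

lemma deriv_mem_Wsub {a b : ℝ} {u φ : ℝ → ℝ}
    (hu : Integrable u (volume.restrict (Set.Ioo a b)))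
    (hφ : ContDiff ℝ 2 φ) (hda : deriv φ a = 0) (hdb : deriv φ b = 0) :
    deriv φ ∈ Wsub a b u := by
  have hφ' : ContDiff ℝ (1 + 1) φ := (show (2 : WithTop ℕ∞) = 1 + 1 by norm_num) ▸ hφ
  have h2 := contDiff_succ_iff_deriv.mp hφ'
  have hc1 : ContDiff ℝ 1 (deriv φ) := h2.2.2
  have cont2 : Continuous (deriv (deriv φ)) := (contDiff_one_iff_deriv.mp hc1).2
  obtain ⟨M, hM⟩ := (isCompact_Icc (a := a) (b := b)).exists_bound_of_continuousOn
    cont2.continuousOn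
  refine ⟨hc1, hda, hdb, ?_⟩
  apply Integrable.bdd_mul (c := max M 0) hu cont2.aestronglyMeasurable.restrict
  filter_upwards [ae_restrict_mem measurableSet_Ioo] with x hx
  exact (hM x (Set.Ioo_subset_Icc_self hx)).trans (le_max_left _ _)

lemma exists_witness {a b : ℝ} (hab : a < b) {u : ℝ → ℝ}
    (hu : Integrable u (volume.restrict (Set.Ioo a b)))
    (hBV : BddAbove (TVset1 a b u)) :
    ∃ v : Radon1 a b, Adm1 a b u v ∧ v.tvNorm ≤ TV1 a b u := by
  classical
  let V := Vsub a b
  let Wd : Submodule ℝ ↥V := (Wsub a b u).comap V.subtype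
  let L : ↥Wd →ₗ[ℝ] ℝ :=
    { toFun := fun x => -∫ t in Set.Ioo a b, deriv (((x : ↥Wd) : ↥V) : ℝ → ℝ) t * u t
      map_add' := by
        rintro x y
        have hx : (((x : ↥Wd) : ↥V) : ℝ → ℝ) ∈ Wsub a b u := x.2
        have hy : (((y : ↥Wd) : ↥V) : ℝ → ℝ) ∈ Wsub a b u := y.2
        have e : (((x + y : ↥Wd) : ↥V) : ℝ → ℝ)
            = (((x : ↥Wd) : ↥V) : ℝ → ℝ) + (((y : ↥Wd) : ↥V) : ℝ → ℝ) := rfl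
        show -∫ t in Set.Ioo a b, deriv (((x + y : ↥Wd) : ↥V) : ℝ → ℝ) t * u t = _
        rw [e, Wint_add hx hy]
        ring
      map_smul' := by
        rintro c x
        have hx : (((x : ↥Wd) : ↥V) : ℝ → ℝ) ∈ Wsub a b u := x.2
        have e : (((c • x : ↥Wd) : ↥V) : ℝ → ℝ) = c • (((x : ↥Wd) : ↥V) : ℝ → ℝ) := rfl
        show -∫ t in Set.Ioo a b, deriv (((c • x : ↥Wd) : ↥V) : ℝ → ℝ) t * u t = _
        rw [e, Wint_smul c hx]
        show _ = c * -∫ t in Set.Ioo a b, deriv (((x : ↥Wd) : ↥V) : ℝ → ℝ) t * u t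
        ring }
  have hHB := exists_extension_of_le_sublinear ⟨Wd, L⟩
    (fun x : ↥V => TV1 a b u * supIoo a b (x : ℝ → ℝ)) ?_ ?_ ?_
  · obtain ⟨G, hG1, hG2⟩ := hHB
    obtain ⟨q, hq⟩ := Submodule.exists_isCompl V
    set proj := Submodule.linearProjOfIsCompl V q hq with hproj
    refine ⟨⟨fun φ => G (proj φ), ?_, ?_, ?_⟩, ?_, ?_⟩
    · intro f g; simp [map_add]
    · intro c f; simp [_root_.map_smul, smul_eq_mul]
    · -- bdd
      refine ⟨TV1 a b u, ?_⟩
      rintro r ⟨φ, hc, hb1, rfl⟩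
      have hφV : φ ∈ V := ⟨1, hb1⟩
      have e : proj φ = ⟨φ, hφV⟩ := Submodule.linearProjOfIsCompl_apply_left hq ⟨φ, hφV⟩
      show G (proj φ) ≤ TV1 a b u
      rw [e]
      refine (hG2 ⟨φ, hφV⟩).trans ?_
      exact mul_le_of_le_one_right (TV1_nonneg hBV) (supIoo_le hab fun x hx => hb1 x hx)
    · -- Adm1
      intro φ hφ hda hdb
      have hW : deriv φ ∈ Wsub a b u := deriv_mem_Wsub hu hφ hda hdb
      have hV' : deriv φ ∈ V := Wsub_bdd hW
      have e : proj (deriv φ) = ⟨deriv φ, hV'⟩ :=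
        Submodule.linearProjOfIsCompl_apply_left hq ⟨deriv φ, hV'⟩
      have hWd : (⟨deriv φ, hV'⟩ : ↥V) ∈ Wd := hW
      have e2 : G ⟨deriv φ, hV'⟩ = -∫ t in Set.Ioo a b, deriv (deriv φ) t * u t := by
        have h := hG1 ⟨⟨deriv φ, hV'⟩, hWd⟩
        exact h
      show (∫ x in Set.Ioo a b, deriv (deriv φ) x * u x) + G (proj (deriv φ)) = 0
      rw [e, e2]; ring
    · -- tvNorm bound
      apply csSup_le
      · exact ⟨G (proj (fun _ => 0)), ⟨fun _ => 0, continuous_const, by simp, rfl⟩⟩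
      · rintro r ⟨φ, hc, hb1, rfl⟩
        have hφV : φ ∈ V := ⟨1, hb1⟩
        have e : proj φ = ⟨φ, hφV⟩ := Submodule.linearProjOfIsCompl_apply_left hq ⟨φ, hφV⟩
        show G (proj φ) ≤ TV1 a b u
        rw [e]
        refine (hG2 ⟨φ, hφV⟩).trans ?_
        exact mul_le_of_le_one_right (TV1_nonneg hBV) (supIoo_le hab fun x hx => hb1 x hx)
  · -- N hom
    intro c hc x
    have e : ((c • x : ↥V) : ℝ → ℝ) = c • (x : ℝ → ℝ) := rfl
    show TV1 a b u * supIoo a b ((c • x : ↥V) : ℝ → ℝ) = _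
    rw [e, supIoo_smul hab (mem_V_bdd x.2) hc]
    ring
  · -- N add
    intro x y
    have e : ((x + y : ↥V) : ℝ → ℝ) = (x : ℝ → ℝ) + (y : ℝ → ℝ) := rfl
    show TV1 a b u * supIoo a b ((x + y : ↥V) : ℝ → ℝ) ≤ _
    rw [e]
    calc TV1 a b u * supIoo a b ((x : ℝ → ℝ) + (y : ℝ → ℝ))
        ≤ TV1 a b u * (supIoo a b (x : ℝ → ℝ) + supIoo a b (y : ℝ → ℝ)) :=
          mul_le_mul_of_nonneg_left (supIoo_add_le hab (mem_V_bdd x.2) (mem_V_bdd y.2))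
            (TV1_nonneg hBV)
      _ = _ := by rw [mul_add]
  · -- f ≤ N
    intro x
    have hx : (((x : ↥Wd) : ↥V) : ℝ → ℝ) ∈ Wsub a b u := x.2
    show -∫ t in Set.Ioo a b, deriv (((x : ↥Wd) : ↥V) : ℝ → ℝ) t * u t ≤ _
    exact key_bound hab hu hBV hx

lemma TV1_le_tvNorm {a b : ℝ} (hab : a < b) {u : ℝ → ℝ} (v : Radon1 a b)
    (hv : Adm1 a b u v) : TV1 a b u ≤ v.tvNorm := by
  apply csSup_le ⟨0, zero_mem_TVset1 a b u⟩
  rintro r ⟨g, hg1, hg2, hg3, hg4, rfl⟩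
  have hd : ∀ x, HasDerivAt (fun y => ∫ t in a..y, g t) (g x) x := fun x =>
    (hg1.continuous.integral_hasStrictDerivAt a x).hasDerivAt
  have hderiv : deriv (fun y => ∫ t in a..y, g t) = g := funext fun x => (hd x).deriv
  have hC2 : ContDiff ℝ 2 (fun y => ∫ t in a..y, g t) := by
    rw [show (2 : WithTop ℕ∞) = 1 + 1 by norm_num]
    refine contDiff_succ_iff_deriv.mpr ⟨fun x => (hd x).differentiableAt, ?_, ?_⟩
    · intro h; exact absurd h (by simp)
    · rw [hderiv]; exact hg1
  have hda : deriv (fun y => ∫ t in a..y, g t) a = 0 := by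
    rw [hderiv]
    exact image_eq_zero_of_notMem_tsupport (fun hmem => (lt_irrefl a (hg3 hmem).1))
  have hdb : deriv (fun y => ∫ t in a..y, g t) b = 0 := by
    rw [hderiv]
    exact image_eq_zero_of_notMem_tsupport (fun hmem => (lt_irrefl b (hg3 hmem).2))
  have h := hv _ hC2 hda hdb
  rw [hderiv] at h
  have hr : (∫ x in Set.Ioo a b, u x * deriv g x) = - v.pair g := by
    have e : (∫ x in Set.Ioo a b, u x * deriv g x)
        = ∫ x in Set.Ioo a b, deriv g x * u x :=
      integral_congr_ae (Filter.Eventually.of_forall fun x => mul_comm _ _)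
    rw [e]; linarith
  apply le_csSup v.bdd
  refine ⟨(-1 : ℝ) • g, ?_, ?_, ?_⟩
  · show Continuous fun x => (-1 : ℝ) • g x
    exact hg1.continuous.const_smul (-1 : ℝ)
  · intro x hx
    have e : ((-1 : ℝ) • g) x = -(g x) := by simp
    rw [e, abs_neg]; exact hg4 x
  · rw [v.pair_smul, hr]; ring

/-- in spatial dimension one the sparse vector field regularizer
coincides with the total variation: `R(u) = TV(u)` for every `u ∈ BV(a,b)`. -/
theorem svf_eq_tv_one_dim (a b : ℝ) (hab : a < b) (u : ℝ → ℝ)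
    (hu : Integrable u (volume.restrict (Set.Ioo a b)))
    (hBV : BddAbove (TVset1 a b u)) :
    R1 a b u = ENNReal.ofReal (TV1 a b u) := by
  apply le_antisymm
  · obtain ⟨v, hAdm, hle⟩ := exists_witness hab hu hBV
    calc R1 a b u ≤ ENNReal.ofReal v.tvNorm := iInf₂_le v hAdm
      _ ≤ ENNReal.ofReal (TV1 a b u) := ENNReal.ofReal_le_ofReal hle
  · exact le_iInf₂ fun v hv => ENNReal.ofReal_le_ofReal (TV1_le_tvNorm hab v hv)

end SVFAux
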